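/- Let R be a Dedekind domain, M and N finitely generated R-modules with N torsion (rank 0), and suppose that for every nonzero associated prime m of N there is a surjective R_m-linear map from M_m to N_m^t (t a positive integer). Then there is a surjective R-linear map from M to N^t. -/

import Mathlib

open Submodule LocalizedModule

section aux

variable {R : Type*} [CommRing R]

lemma aux_exists_inv {p : Ideal R} (hp : p.IsMaximal) (e : ℕ) {s : R} (hs : s ∉ p) :
    ∃ a : R, 1 - a * s ∈ p ^ e := by
  obtain ⟨y, i, hi, hyi⟩ := hp.exists_inv hs
  have h1 : IsCoprime (Ideal.span {s}) p := by
    rw [Ideal.isCoprime_iff_exists]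
    exact ⟨y * s, Ideal.mem_span_singleton'.mpr ⟨y, rfl⟩, i, hi, hyi⟩
  have h2 := h1.pow_right (n := e)
  rw [Ideal.isCoprime_iff_exists] at h2
  obtain ⟨j, hj, k, hk, hjk⟩ := h2
  obtain ⟨a, rfl⟩ := Ideal.mem_span_singleton'.mp hj
  refine ⟨a, ?_⟩
  have : (1 : R) - a * s = k := by linear_combination -hjk
  rwa [this]

lemma aux_isUnit {C : Type*} [AddCommGroup C] [Module R C]
    {p : Ideal R} (hp : p.IsMaximal) {e : ℕ}
    (htors : ∀ a ∈ p ^ e, ∀ c : C, a • c = 0)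
    {s : R} (hs : s ∉ p) : IsUnit (algebraMap R (Module.End R C) s) := by
  obtain ⟨a, ha⟩ := aux_exists_inv hp e hs
  have hmul : ∀ b d : R, b * d = 1 - (1 - b * d) := by intro b d; ring
  have key : ∀ b d : R, (1 - b * d ∈ p ^ e) →
      algebraMap R (Module.End R C) b * algebraMap R (Module.End R C) d = 1 := by
    intro b d hbd
    ext c
    have h0 := htors _ hbd c
    rw [sub_smul, one_smul, sub_eq_zero] at h0
    show b • d • c = c
    rw [← mul_smul]
    exact h0.symm
  exact ⟨⟨algebraMap R (Module.End R C) s, algebraMap R (Module.End R C) a,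
    key s a (by rwa [mul_comm] at ha), key a s ha⟩, rfl⟩

end aux

theorem stmt_15 {R M N : Type*} [CommRing R] [IsDomain R] [IsDedekindDomain R]
    [AddCommGroup M] [Module R M] [Module.Finite R M]
    [AddCommGroup N] [Module R N] [Module.Finite R N]
    (htor : Module.IsTorsion R N)
    (t : ℕ) (ht : 0 < t)
    (hloc : ∀ (m : Ideal R) (hm : m ∈ associatedPrimes R N), m ≠ ⊥ →
      ∃ g : LocalizedModule (@Ideal.primeCompl R _ m hm.1) M →ₗ[Localization
            (@Ideal.primeCompl R _ m hm.1)]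
          (Fin t → LocalizedModule (@Ideal.primeCompl R _ m hm.1) N),
        Function.Surjective g) :
    ∃ f : M →ₗ[R] (Fin t → N), Function.Surjective f := by
  classical
  set I := (⊤ : Submodule R N).annihilator with hIdef
  set P := (UniqueFactorizationMonoid.factors I).toFinset with hPdef
  set e : Ideal R → ℕ := fun p => (UniqueFactorizationMonoid.factors I).count p with hedef
  set C : P → Submodule R N := fun p => torsionBySet R N ((p : Ideal R) ^ e p : Ideal R)
    with hCdef
  have hdec : DirectSum.IsInternal C := Submodule.isInternal_prime_power_torsion htor
  -- basic facts about each p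
  have hprime : ∀ p : P, Prime (p : Ideal R) := fun p =>
    UniqueFactorizationMonoid.prime_of_factor _ (Multiset.mem_toFinset.mp p.2)
  have hpmax : ∀ p : P, Ideal.IsMaximal (p : Ideal R) := fun p =>
    Ideal.IsPrime.isMaximal (Ideal.isPrime_of_prime (hprime p)) (hprime p).ne_zero
  have htors : ∀ (p : P) (a : R), a ∈ (p : Ideal R) ^ e p → ∀ c : C p, a • (c : N) = 0 := by
    intro p a ha c
    exact (Submodule.mem_torsionBySet_iff _ _).mp c.2 ⟨a, ha⟩
  -- the decomposition equivalence
  set ψ : (DirectSum P (fun p : P => ↥(C p))) ≃ₗ[R] N := LinearEquiv.ofBijective (DirectSum.coeLinearMap C) hdec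
    with hψdef
  -- the projections
  set π : ∀ p : P, N →ₗ[R] C p :=
    fun p => (DirectSum.component R P (fun p => C p) p).comp ψ.symm.toLinearMap with hπdef
  have hπ : ∀ (p : P) (x : C p), π p (x : N) = x := by
    intro p x
    exact hdec.ofBijective_coeLinearMap_same x
  -- localized surjections give componentwise surjections
  have htors' : ∀ (p : P), ∀ a ∈ (p : Ideal R) ^ e p, ∀ c : C p, a • c = 0 := by
    intro p a ha c
    exact Subtype.ext (by simpa using htors p a ha c)
  have key : ∀ p : P, ∃ F : M →ₗ[R] (Fin t → C p), Function.Surjective F := by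
    intro p
    by_cases hCp : C p = ⊥
    · refine ⟨0, fun c => ⟨0, ?_⟩⟩
      funext i
      apply Subtype.ext
      have h0 : ((c i : N)) = 0 := (Submodule.eq_bot_iff _).mp hCp _ (c i).2
      simp [h0.symm]
    · haveI : Nontrivial (C p) := Submodule.nontrivial_iff_ne_bot.mpr hCp
      obtain ⟨q, hqprime, x, hxq⟩ := associatedPrimes.nonempty R (C p)
      haveI : q.IsPrime := hqprime
      have hpe : (p : Ideal R) ^ e p ≤ q := by
        intro a ha
        rw [hxq]
        exact Ideal.le_radical (Submodule.mem_colon_singleton.mpr (by rw [Submodule.mem_bot]; exact htors' p a ha x))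
      have hple : (p : Ideal R) ≤ q := Ideal.IsPrime.le_of_pow_le hpe
      have hqp : q = (p : Ideal R) := ((hpmax p).eq_of_le hqprime.ne_top hple).symm
      have hass : (p : Ideal R) ∈ associatedPrimes R N := by
        rw [AssociatedPrimes.mem_iff]
        have h1 : IsAssociatedPrime q N :=
          IsAssociatedPrime.map_of_injective (f := (C p).subtype) ⟨hqprime, x, hxq⟩
            (Submodule.injective_subtype _)
        rwa [hqp] at h1
      haveI : (p : Ideal R).IsPrime := Ideal.isPrime_of_prime (hprime p)
      obtain ⟨g, hg⟩ := hloc p hass (hprime p).ne_zero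
      have hunit : ∀ s : (p : Ideal R).primeCompl,
          IsUnit (algebraMap R (Module.End R (C p)) (s : R)) := fun s =>
        aux_isUnit (hpmax p) (htors' p) s.2
      set h := LocalizedModule.lift (p : Ideal R).primeCompl (π p) hunit with hhdef
      have hh : ∀ v : N, h (LocalizedModule.mk v 1) = π p v := by
        intro v
        exact DFunLike.congr_fun (LocalizedModule.lift_comp (p : Ideal R).primeCompl
          (π p) hunit) v
      refine ⟨(LinearMap.pi fun i => h.comp (LinearMap.proj i)).comp
        ((g.restrictScalars R).comp (mkLinearMap (p : Ideal R).primeCompl M)), ?_⟩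
      intro c
      obtain ⟨z, hz⟩ := hg (fun i => LocalizedModule.mk (c i : N) 1)
      induction z using LocalizedModule.induction_on with
      | _ m s =>
        obtain ⟨a, ha⟩ := aux_exists_inv (hpmax p) (e p) s.2
        refine ⟨a • m, ?_⟩
        funext i
        simp only [LinearMap.coe_comp, Function.comp_apply, LinearMap.pi_apply,
          LinearMap.proj_apply, LocalizedModule.mkLinearMap_apply]
        have h2 : (LocalizedModule.mk (a • m) 1 :
            LocalizedModule (p : Ideal R).primeCompl M) =
            (a * (s : R)) • LocalizedModule.mk m s := by
          rw [mul_smul, LocalizedModule.smul'_mk, ← Submonoid.smul_def,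
            LocalizedModule.mk_cancel, LocalizedModule.smul'_mk]
        rw [h2, (g.restrictScalars R).map_smul, LinearMap.restrictScalars_apply, hz]
        have h3 : ((a * (s : R)) • (fun i => LocalizedModule.mk (c i : N) 1 :
            Fin t → LocalizedModule (p : Ideal R).primeCompl N)) i =
            LocalizedModule.mk ((a * (s : R)) • (c i : N)) 1 := by
          simp [LocalizedModule.smul'_mk]
        rw [h3, hh, map_smul, hπ]
        have h4 := htors' p _ ha (c i)
        rw [sub_smul, one_smul, sub_eq_zero] at h4
        exact h4.symm
  choose F hF using key
  -- CRT elements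
  have crt : ∀ p : P, ∃ u : R, (1 - u ∈ (p : Ideal R) ^ e p) ∧
      ∀ q : P, q ≠ p → u ∈ (q : Ideal R) ^ e q := by
    intro p
    have hcop : IsCoprime ((p : Ideal R) ^ e p)
        (∏ q ∈ Finset.univ.erase p, (q : Ideal R) ^ e (q : Ideal R)) := by
      refine IsCoprime.pow_left (IsCoprime.prod_right fun q hq => ?_)
      have hne : (p : Ideal R) ≠ (q : Ideal R) := by
        intro h
        exact (Finset.mem_erase.mp hq).1 (Subtype.ext h.symm)
      exact IsCoprime.pow_right (Ideal.isCoprime_iff_sup_eq.mpr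
        (Ideal.IsMaximal.coprime_of_ne (hpmax p) (hpmax q) hne))
    rw [Ideal.isCoprime_iff_exists] at hcop
    obtain ⟨i, hi, j, hj, hij⟩ := hcop
    refine ⟨j, by rwa [show (1 : R) - j = i by linear_combination -hij], fun q hq => ?_⟩
    have hle : (∏ q ∈ Finset.univ.erase p, (q : Ideal R) ^ e (q : Ideal R)) ≤
        (q : Ideal R) ^ e (q : Ideal R) := by
      refine le_trans Ideal.prod_le_inf (Finset.inf_le ?_)
      exact Finset.mem_erase.mpr ⟨hq, Finset.mem_univ q⟩
    exact hle hj
  choose u hu1 hu2 using crt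
  -- the combined map
  set G : M →ₗ[R] (∀ p : P, Fin t → C p) := LinearMap.pi (fun p => F p) with hGdef
  have hG : Function.Surjective G := by
    intro c
    choose m hm using fun p => hF p (c p)
    refine ⟨∑ p : P, u p • m p, ?_⟩
    funext q
    have : G (∑ p : P, u p • m p) q = ∑ p : P, u p • F q (m p) := by
      simp [hGdef, LinearMap.pi_apply, map_sum, map_smul]
    rw [this, Finset.sum_eq_single q]
    · -- u q • F q (m q) = c q
      funext i
      apply Subtype.ext
      have h0 := htors q _ (hu1 q) ((c q) i)
      rw [sub_smul, one_smul, sub_eq_zero] at h0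
      calc ((u q • F q (m q)) i : N) = u q • ((F q (m q)) i : N) := rfl
        _ = u q • ((c q) i : N) := by rw [hm q]
        _ = ((c q) i : N) := h0.symm
    · intro p _ hpq
      funext i
      apply Subtype.ext
      have h0 := htors q _ (hu2 p q hpq.symm) ((F q (m p)) i)
      calc ((u p • F q (m p)) i : N) = u p • ((F q (m p)) i : N) := rfl
        _ = 0 := h0
        _ = ((0 : Fin t → C q) i : N) := rfl
    · intro h; exact absurd (Finset.mem_univ q) h
  -- assemble
  set χ : (∀ p : P, C p) ≃ₗ[R] N :=
    (DirectSum.linearEquivFunOnFintype R P (fun p => C p)).symm.trans ψ with hχdef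
  refine ⟨LinearMap.pi (fun i => χ.toLinearMap.comp
    (LinearMap.pi (fun p => (LinearMap.proj i).comp ((LinearMap.proj p).comp G)))), ?_⟩
  intro y
  obtain ⟨x, hx⟩ := hG (fun p i => χ.symm (y i) p)
  refine ⟨x, ?_⟩
  funext i
  simp only [LinearMap.pi_apply, LinearMap.coe_comp, Function.comp_apply, LinearEquiv.coe_coe]
  have harg : ((LinearMap.pi fun p => LinearMap.proj i ∘ₗ LinearMap.proj p ∘ₗ G)) x
      = χ.symm (y i) := by
    funext p
    simp only [LinearMap.pi_apply, LinearMap.coe_comp, Function.comp_apply, LinearMap.proj_apply]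
    rw [hx]
  rw [harg]
  exact χ.apply_symm_apply (y i)
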